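/- (Fidelity triangle-type bound) For any density matrices ρ_{AB} on H_A ⊗ H_B, σ_A on H_A, and χ_B on H_B, one has F(ρ_{AB}, σ_A ⊗ ρ_B) ≥ F(ρ_{AB}, σ_A ⊗ χ_B)², where ρ_B = tr_A ρ_{AB}. -/

import Mathlib

open scoped Kronecker ComplexOrder ENNReal
open Matrix

noncomputable section

namespace QIT

variable {n m A B C X : Type*} [Fintype n] [DecidableEq n] [Fintype m] [DecidableEq m]
  [Fintype A] [DecidableEq A] [Fintype B] [DecidableEq B] [Fintype C] [DecidableEq C]
  [Fintype X] [DecidableEq X]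

/-- Real power of a matrix via the spectral decomposition (junk value `0` if not Hermitian). -/
def matRpow (M : Matrix n n ℂ) (p : ℝ) : Matrix n n ℂ :=
  if h : M.IsHermitian then
    (h.eigenvectorUnitary : Matrix n n ℂ) *
      Matrix.diagonal (fun i => ((h.eigenvalues i ^ p : ℝ) : ℂ)) *
      (star (h.eigenvectorUnitary : Matrix n n ℂ))
  else 0

/-- Base-2 matrix logarithm via the spectral decomposition. -/
def matLog (M : Matrix n n ℂ) : Matrix n n ℂ :=
  if h : M.IsHermitian then
    (h.eigenvectorUnitary : Matrix n n ℂ) *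
      Matrix.diagonal (fun i => ((Real.logb 2 (h.eigenvalues i) : ℝ) : ℂ)) *
      (star (h.eigenvectorUnitary : Matrix n n ℂ))
  else 0

/-- `tr (M ^ p)` for a Hermitian matrix `M`, via eigenvalues. -/
def traceRpow (p : ℝ) (M : Matrix n n ℂ) : ℝ :=
  if h : M.IsHermitian then ∑ i, h.eigenvalues i ^ p else 0

/-- The singular values of a matrix: square roots of eigenvalues of `Mᴴ M`. -/
def singularValues (M : Matrix n n ℂ) : n → ℝ :=
  fun i => Real.sqrt ((Matrix.posSemidef_conjTranspose_mul_self M).1.eigenvalues i)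

/-- The trace norm `‖M‖₁ = tr |M|`. -/
def traceNorm (M : Matrix n n ℂ) : ℝ := ∑ i, singularValues M i

/-- The Schatten `p`-norm (quasinorm for `p < 1`) for a real exponent `p`. -/
def schattenNorm (p : ℝ) (M : Matrix n n ℂ) : ℝ :=
  (∑ i, singularValues M i ^ p) ^ (1 / p)

/-- The Schatten `p`-norm with exponent in `[1, ∞]`; for `p = ∞` it is the operator norm,
i.e. the largest singular value. -/
def schattenNormE (p : ℝ≥0∞) (M : Matrix n n ℂ) : ℝ :=
  if p = ∞ then ⨆ i, singularValues M i else schattenNorm p.toReal M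

/-- The fidelity `F(ρ,σ) = ‖√ρ √σ‖₁`. -/
def fidelity (ρ σ : Matrix n n ℂ) : ℝ :=
  traceNorm (matRpow ρ (1 / 2) * matRpow σ (1 / 2))

/-- The Rényi entropy of order `α` (base-2 logarithm). -/
def renyiEntropy (α : ℝ) (ρ : Matrix n n ℂ) : ℝ :=
  (1 - α)⁻¹ * Real.logb 2 (traceRpow α ρ)

/-- The quantum relative entropy `tr [ρ (log ρ - log σ)]` (base-2 logarithms). -/
def relEntropy (ρ σ : Matrix n n ℂ) : ℝ :=
  ((ρ * (matLog ρ - matLog σ)).trace).re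

/-- The sandwiched Rényi divergence of order `α`, equal to the quantum relative entropy
at `α = 1`. -/
def sandwichedRenyi (α : ℝ) (ρ σ : Matrix n n ℂ) : ℝ :=
  if α = 1 then relEntropy ρ σ
  else (α - 1)⁻¹ *
    Real.logb 2 (traceRpow α (matRpow σ ((1 - α) / (2 * α)) * ρ * matRpow σ ((1 - α) / (2 * α))))

/-- `ρ` is a density matrix. -/
def IsDensity (ρ : Matrix n n ℂ) : Prop := ρ.PosSemidef ∧ ρ.trace = 1

/-- Partial trace over the second tensor factor. -/
def ptraceSnd (M : Matrix (A × B) (A × B) ℂ) : Matrix A A ℂ :=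
  Matrix.of fun i j => ∑ k, M (i, k) (j, k)

/-- Partial trace over the first tensor factor. -/
def ptraceFst (M : Matrix (A × B) (A × B) ℂ) : Matrix B B ℂ :=
  Matrix.of fun i j => ∑ k, M (k, i) (k, j)

/-- The Rényi conditional entropy `S̃_α(A|B)_ρ = - min_{τ_B} D̃_α(ρ_{AB} ‖ I_A ⊗ τ_B)`. -/
def condRenyi (α : ℝ) (ρ : Matrix (A × B) (A × B) ℂ) : ℝ :=
  - sInf {x : ℝ | ∃ τ : Matrix B B ℂ, τ.PosSemidef ∧ τ.trace = 1 ∧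
      x = sandwichedRenyi α ρ ((1 : Matrix A A ℂ) ⊗ₖ τ)}

/-- The Rényi mutual information `Ĩ_α(A;B)_ρ = min_{τ_B} D̃_α(ρ_{AB} ‖ ρ_A ⊗ τ_B)`. -/
def mutualRenyi (α : ℝ) (ρ : Matrix (A × B) (A × B) ℂ) : ℝ :=
  sInf {x : ℝ | ∃ τ : Matrix B B ℂ, τ.PosSemidef ∧ τ.trace = 1 ∧
      x = sandwichedRenyi α ρ (ptraceSnd ρ ⊗ₖ τ)}

/-! ### Auxiliary spectral toolkit -/

section FidelityAux

variable {α β : Type*} [Fintype α] [DecidableEq α] [Fintype β] [DecidableEq β]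

/-- functional calculus for a Hermitian matrix -/
def fc {M : Matrix α α ℂ} (h : M.IsHermitian) (f : ℝ → ℝ) : Matrix α α ℂ :=
  (h.eigenvectorUnitary : Matrix α α ℂ) *
    Matrix.diagonal (fun i => ((f (h.eigenvalues i) : ℝ) : ℂ)) *
    (star (h.eigenvectorUnitary : Matrix α α ℂ))

variable {M : Matrix α α ℂ} (h : M.IsHermitian) (f g : ℝ → ℝ)

lemma star_mul_self_eigU :
    (star (h.eigenvectorUnitary : Matrix α α ℂ)) * (h.eigenvectorUnitary : Matrix α α ℂ) = 1 := by
  simpa using (Matrix.mem_unitaryGroup_iff').mp h.eigenvectorUnitary.2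

lemma mul_star_self_eigU :
    (h.eigenvectorUnitary : Matrix α α ℂ) * (star (h.eigenvectorUnitary : Matrix α α ℂ)) = 1 := by
  simpa using (Matrix.mem_unitaryGroup_iff).mp h.eigenvectorUnitary.2

lemma fc_mul_fc : fc h f * fc h g = fc h (fun x => f x * g x) := by
  unfold fc
  simp only [Matrix.mul_assoc]
  rw [show (star (h.eigenvectorUnitary : Matrix α α ℂ)) *
      ((h.eigenvectorUnitary : Matrix α α ℂ) *
        (Matrix.diagonal (fun i => ((g (h.eigenvalues i) : ℝ) : ℂ)) * (star (h.eigenvectorUnitary : Matrix α α ℂ)))) =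
      ((star (h.eigenvectorUnitary : Matrix α α ℂ)) * (h.eigenvectorUnitary : Matrix α α ℂ)) *
        (Matrix.diagonal (fun i => ((g (h.eigenvalues i) : ℝ) : ℂ)) * (star (h.eigenvectorUnitary : Matrix α α ℂ)))
      from by simp only [Matrix.mul_assoc], star_mul_self_eigU, one_mul]
  congr 1
  rw [← Matrix.mul_assoc, Matrix.diagonal_mul_diagonal]
  congr 1
  funext i
  push_cast
  ring

lemma diag_herm : (Matrix.diagonal (fun i => ((f (h.eigenvalues i) : ℝ) : ℂ))).IsHermitian := by
  apply Matrix.isHermitian_diagonal_of_self_adjoint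
  funext i
  exact Complex.conj_ofReal _

lemma fc_isHermitian : (fc h f).IsHermitian := by
  unfold fc
  rw [Matrix.IsHermitian, Matrix.conjTranspose_mul, Matrix.conjTranspose_mul,
    Matrix.star_eq_conjTranspose, Matrix.conjTranspose_conjTranspose, (diag_herm h f),
    Matrix.mul_assoc]

lemma fc_posSemidef (hf : ∀ i, 0 ≤ f (h.eigenvalues i)) : (fc h f).PosSemidef := by
  unfold fc
  rw [Matrix.star_eq_conjTranspose]
  refine Matrix.PosSemidef.mul_mul_conjTranspose_same
    (Matrix.posSemidef_diagonal_iff.mpr fun i => ?_) _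
  rw [Complex.le_def]
  simp [hf i]

lemma fc_id : fc h (fun x => x) = M := by
  rw [fc]; exact h.spectral_theorem.symm

lemma fc_one : fc h (fun _ => 1) = 1 := by
  unfold fc
  rw [show Matrix.diagonal (fun i : α => ((1:ℝ):ℂ)) = 1 by simp, Matrix.mul_one]
  simpa using (Matrix.mem_unitaryGroup_iff).mp h.eigenvectorUnitary.2

lemma fc_zero : fc h (fun _ => 0) = 0 := by
  unfold fc
  rw [show Matrix.diagonal (fun i : α => ((0:ℝ):ℂ)) = 0 by simp]
  simp

lemma fc_sub : fc h f - fc h g = fc h (fun x => f x - g x) := by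
  unfold fc
  rw [← Matrix.sub_mul, ← Matrix.mul_sub, Matrix.diagonal_sub]
  norm_num

lemma fc_congr (hfg : ∀ i, f (h.eigenvalues i) = g (h.eigenvalues i)) : fc h f = fc h g := by
  have : (fun i => ((f (h.eigenvalues i) : ℝ) : ℂ)) = fun i => ((g (h.eigenvalues i) : ℝ) : ℂ) :=
    funext fun i => by rw [hfg i]
  rw [fc, fc, this]

lemma trace_fc : (fc h f).trace = ((∑ i, f (h.eigenvalues i) : ℝ) : ℂ) := by
  unfold fc
  rw [Matrix.trace_mul_cycle, star_mul_self_eigU, one_mul, Matrix.trace_diagonal]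
  push_cast
  rfl

lemma fc_conj_diag : (star (h.eigenvectorUnitary : Matrix α α ℂ)) * fc h f *
    (h.eigenvectorUnitary : Matrix α α ℂ) =
    Matrix.diagonal (fun i => ((f (h.eigenvalues i) : ℝ) : ℂ)) := by
  unfold fc
  rw [show (star (h.eigenvectorUnitary : Matrix α α ℂ)) *
      ((h.eigenvectorUnitary : Matrix α α ℂ) *
        Matrix.diagonal (fun i => ((f (h.eigenvalues i) : ℝ) : ℂ)) *
        (star (h.eigenvectorUnitary : Matrix α α ℂ))) *
      (h.eigenvectorUnitary : Matrix α α ℂ) =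
      ((star (h.eigenvectorUnitary : Matrix α α ℂ)) * (h.eigenvectorUnitary : Matrix α α ℂ)) *
        Matrix.diagonal (fun i => ((f (h.eigenvalues i) : ℝ) : ℂ)) *
        ((star (h.eigenvectorUnitary : Matrix α α ℂ)) * (h.eigenvectorUnitary : Matrix α α ℂ))
      from by simp only [Matrix.mul_assoc], star_mul_self_eigU, one_mul, Matrix.mul_one]

lemma fc_nonneg_of_psd (hpsd : (fc h f).PosSemidef) : ∀ i, 0 ≤ f (h.eigenvalues i) := by
  intro i
  have h2 := hpsd.conjTranspose_mul_mul_same (h.eigenvectorUnitary : Matrix α α ℂ)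
  rw [← Matrix.star_eq_conjTranspose, fc_conj_diag] at h2
  have h3 := Matrix.posSemidef_diagonal_iff.mp h2 i
  rw [Complex.le_def] at h3
  simpa using h3.1

/-- conjugation preserves the Loewner order -/
lemma psd_conj_left {X Y : Matrix α α ℂ} (hXY : (Y - X).PosSemidef) (C : Matrix β α ℂ) :
    (C * Y * Cᴴ - C * X * Cᴴ).PosSemidef := by
  have : C * Y * Cᴴ - C * X * Cᴴ = C * (Y - X) * Cᴴ := by
    rw [Matrix.mul_sub, Matrix.sub_mul]
  rw [this]
  exact hXY.mul_mul_conjTranspose_same C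

lemma psd_conj_right {X Y : Matrix α α ℂ} (hXY : (Y - X).PosSemidef) (C : Matrix α β ℂ) :
    (Cᴴ * Y * C - Cᴴ * X * C).PosSemidef := by
  have : Cᴴ * Y * C - Cᴴ * X * C = Cᴴ * (Y - X) * C := by
    rw [Matrix.mul_sub, Matrix.sub_mul]
  rw [this]
  exact hXY.conjTranspose_mul_mul_same C

lemma psd_diag_nonneg {X : Matrix α α ℂ} (hX : X.PosSemidef) (i : α) : 0 ≤ X i i := by
  exact hX.diag_nonneg

lemma psd_trace_re_nonneg {X : Matrix α α ℂ} (hX : X.PosSemidef) : 0 ≤ X.trace.re := by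
  rw [Matrix.trace]
  simp only [Complex.re_sum]
  exact Finset.sum_nonneg fun i _ => by
    have := psd_diag_nonneg hX i
    rw [Complex.le_def] at this
    simpa using this.1

lemma trace_mono_of_psd {X Y : Matrix α α ℂ} (hXY : (Y - X).PosSemidef) :
    X.trace.re ≤ Y.trace.re := by
  have := psd_trace_re_nonneg hXY
  rw [Matrix.trace_sub, Complex.sub_re] at this
  linarith

/-- the flip lemma : AAᴴ ⪯ 1 implies AᴴA ⪯ 1 -/
lemma flip_contraction {A : Matrix α β ℂ} (hA : ((1 : Matrix α α ℂ) - A * Aᴴ).PosSemidef) :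
    ((1 : Matrix β β ℂ) - Aᴴ * A).PosSemidef := by
  set T : Matrix β β ℂ := Aᴴ * A with hT
  have hTpsd : T.PosSemidef := Matrix.posSemidef_conjTranspose_mul_self A
  have hTh : T.IsHermitian := hTpsd.1
  have key : (T - T * T).PosSemidef := by
    have e : T - T * T = Aᴴ * ((1 : Matrix α α ℂ) - A * Aᴴ) * A := by
      rw [Matrix.mul_sub, Matrix.sub_mul, Matrix.mul_one, hT]
      simp only [Matrix.mul_assoc]
    rw [e]
    exact hA.conjTranspose_mul_mul_same A
  have e1 : fc hTh (fun x => x) * fc hTh (fun x => x) = fc hTh (fun x => x * x) :=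
    fc_mul_fc hTh _ _
  have e2 : fc hTh (fun x => x) - fc hTh (fun x => x * x) = fc hTh (fun x => x - x * x) :=
    fc_sub hTh _ _
  have key2 : (fc hTh fun x => x - x * x).PosSemidef := by
    rw [← e2, ← e1, fc_id]
    exact key
  have heig : ∀ i, 0 ≤ hTh.eigenvalues i ∧ hTh.eigenvalues i ≤ 1 := by
    intro i
    have h1 := hTpsd.eigenvalues_nonneg i
    have h2 := fc_nonneg_of_psd hTh _ key2 i
    exact ⟨h1, by nlinarith⟩
  have e3 : fc hTh (fun _ => 1) - fc hTh (fun x => x) = fc hTh (fun x => 1 - x) :=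
    fc_sub hTh _ _
  have e4 : (1 : Matrix β β ℂ) - T = fc hTh (fun x => 1 - x) := by
    rw [← e3, fc_one hTh, fc_id]
  rw [e4]
  exact fc_posSemidef hTh _ fun i => by linarith [(heig i).2]

end FidelityAux
section FidelityAux2

variable {α β : Type*} [Fintype α] [DecidableEq α] [Fintype β] [DecidableEq β]

/-- the square root of a PSD matrix via functional calculus -/
def _root_.Matrix.PosSemidef.sqrt {S : Matrix α α ℂ} (hS : S.PosSemidef) : Matrix α α ℂ :=
  fc hS.1 Real.sqrt

lemma _root_.Matrix.PosSemidef.posSemidef_sqrt {S : Matrix α α ℂ} (hS : S.PosSemidef) :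
    hS.sqrt.PosSemidef :=
  fc_posSemidef hS.1 _ fun _ => Real.sqrt_nonneg _

lemma _root_.Matrix.PosSemidef.sqrt_mul_self {S : Matrix α α ℂ} (hS : S.PosSemidef) :
    hS.sqrt * hS.sqrt = S := by
  unfold Matrix.PosSemidef.sqrt
  rw [fc_mul_fc]
  conv_rhs => rw [← fc_id hS.1]
  exact fc_congr hS.1 _ _ fun i => Real.mul_self_sqrt (hS.eigenvalues_nonneg i)

section SqrtUniq
open scoped MatrixOrder Matrix.Norms.L2Operator

lemma cfcsqrt_eq_sqrt {S : Matrix α α ℂ} (hS : S.PosSemidef) : CFC.sqrt S = hS.sqrt := by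
  rw [CFC.sqrt_eq_cfc, cfc_nnreal_eq_real _ S hS.nonneg, hS.1.cfc_eq, Matrix.IsHermitian.cfc,
    Unitary.conjStarAlgAut_apply]
  unfold Matrix.PosSemidef.sqrt fc
  congr 2
  congr 1
  funext i
  simp [Real.coe_sqrt, Real.coe_toNNReal', max_eq_left (hS.eigenvalues_nonneg i)]

lemma _root_.Matrix.PosSemidef.eq_sqrt_of_sq_eq {T S : Matrix α α ℂ} (hT : T.PosSemidef)
    (hS : S.PosSemidef) (h : T ^ 2 = S) : T = hS.sqrt := by
  rw [← cfcsqrt_eq_sqrt hS]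
  exact ((CFC.sqrt_eq_iff S T hS.nonneg hT.nonneg).2 (by rw [← h, sq])).symm

end SqrtUniq

lemma sqrt_eq_fc {S : Matrix α α ℂ} (hS : S.PosSemidef) : hS.sqrt = fc hS.1 Real.sqrt := rfl

lemma matRpow_eq_fc {M : Matrix α α ℂ} (h : M.IsHermitian) (p : ℝ) :
    matRpow M p = fc h (fun x => x ^ p) := by
  rw [matRpow, dif_pos h]
  rfl

lemma matRpow_psd_eq_sqrt {S : Matrix α α ℂ} (hS : S.PosSemidef) :
    matRpow S (1 / 2) = hS.sqrt := by
  rw [matRpow_eq_fc hS.1, sqrt_eq_fc hS]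
  exact fc_congr hS.1 (fun x => x ^ ((1:ℝ) / 2)) Real.sqrt
    (fun i => by rw [Real.sqrt_eq_rpow])

lemma traceNorm_eq_trace_fc (M : Matrix α α ℂ) :
    ((traceNorm M : ℝ) : ℂ) = (fc (Matrix.posSemidef_conjTranspose_mul_self M).1 Real.sqrt).trace := by
  rw [traceNorm, trace_fc]
  norm_cast

lemma traceNorm_nonneg (M : Matrix α α ℂ) : 0 ≤ traceNorm M :=
  Finset.sum_nonneg fun i _ => Real.sqrt_nonneg _

/-- Frobenius Cauchy-Schwarz -/
lemma abs_trace_sq_le (A B : Matrix α α ℂ) :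
    ‖(Aᴴ * B).trace‖ ^ 2 ≤ (Aᴴ * A).trace.re * (Bᴴ * B).trace.re := by
  classical
  set a : EuclideanSpace ℂ (α × α) := WithLp.toLp 2 (fun p : α × α => A p.2 p.1) with ha
  set b : EuclideanSpace ℂ (α × α) := WithLp.toLp 2 (fun p : α × α => B p.2 p.1) with hb
  have hinner : (inner ℂ a b : ℂ) = (Aᴴ * B).trace := by
    rw [Matrix.trace]
    simp only [PiLp.inner_apply, PiLp.toLp_apply, RCLike.inner_apply, Matrix.diag_apply, Matrix.mul_apply,
      Matrix.conjTranspose_apply]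
    rw [← Finset.sum_product']
    apply Finset.sum_congr rfl
    intro p _
    simp [ha, hb, Complex.star_def, mul_comm]
  have hnorm : ∀ C : Matrix α α ℂ, ∀ c : EuclideanSpace ℂ (α × α),
      (c = WithLp.toLp 2 (fun p : α × α => C p.2 p.1)) → ‖c‖ ^ 2 = (Cᴴ * C).trace.re := by
    intro C c hc
    rw [EuclideanSpace.norm_eq, Real.sq_sqrt (by positivity)]
    rw [Matrix.trace]
    simp only [Complex.re_sum, Matrix.diag_apply, Matrix.mul_apply, Matrix.conjTranspose_apply]
    rw [← Finset.sum_product']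
    apply Finset.sum_congr rfl
    intro p _
    rw [hc]
    simp only [Complex.star_def]
    rw [mul_comm, Complex.mul_conj]
    simp [Complex.normSq_eq_norm_sq]
    norm_cast
  have cs := norm_inner_le_norm (𝕜 := ℂ) a b
  rw [hinner] at cs
  have h2 : ‖(Aᴴ * B).trace‖ ^ 2 ≤ (‖a‖ * ‖b‖) ^ 2 := by
    have : ‖(Aᴴ * B).trace‖ = ‖(Aᴴ * B).trace‖ := rfl
    rw [this]
    exact pow_le_pow_left₀ (norm_nonneg _) cs 2
  calc ‖(Aᴴ * B).trace‖ ^ 2 ≤ (‖a‖ * ‖b‖) ^ 2 := h2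
    _ = ‖a‖ ^ 2 * ‖b‖ ^ 2 := by ring
    _ = (Aᴴ * A).trace.re * (Bᴴ * B).trace.re := by
        rw [hnorm A a ha, hnorm B b hb]

end FidelityAux2
section FidelityAux3

variable {α β : Type*} [Fintype α] [DecidableEq α] [Fintype β] [DecidableEq β]

private lemma ar_inv_mul {x : ℝ} (hx : 0 ≤ x) :
    ((if x = 0 then 0 else (Real.sqrt x)⁻¹) * x) = Real.sqrt x := by
  split_ifs with h
  · simp [h]
  · have hpos : 0 < Real.sqrt x := Real.sqrt_pos.mpr (lt_of_le_of_ne hx (Ne.symm h))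
    have hsq : Real.sqrt x * Real.sqrt x = x := Real.mul_self_sqrt hx
    field_simp
    all_goals nlinarith [hsq]

private lemma ar_qsq {x : ℝ} (hx : 0 ≤ x) :
    ((if x = 0 then 0 else (Real.sqrt x)⁻¹) * x * (if x = 0 then 0 else (Real.sqrt x)⁻¹)) =
      (if x = 0 then 0 else 1) := by
  split_ifs with h
  · simp [h]
  · have hpos : 0 < Real.sqrt x := Real.sqrt_pos.mpr (lt_of_le_of_ne hx (Ne.symm h))
    have hsq : Real.sqrt x * Real.sqrt x = x := Real.mul_self_sqrt hx
    field_simp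
    all_goals nlinarith [hsq]

/-- The trace-norm duality upper bound: `|tr (M K)| ≤ ‖M‖₁` for a contraction `K`. -/
lemma abs_trace_mul_le_traceNorm (M K : Matrix α α ℂ)
    (hK : ((1 : Matrix α α ℂ) - K * Kᴴ).PosSemidef) :
    ‖(M * K).trace‖ ≤ traceNorm M := by
  classical
  have hS : (Mᴴ * M).PosSemidef := Matrix.posSemidef_conjTranspose_mul_self M
  set h : (Mᴴ * M).IsHermitian := hS.1 with hh
  have heig : ∀ i, 0 ≤ h.eigenvalues i := fun i => hS.eigenvalues_nonneg i
  set P : Matrix α α ℂ := fc h Real.sqrt with hP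
  set R : Matrix α α ℂ := fc h (fun x => Real.sqrt (Real.sqrt x)) with hR
  set Q : Matrix α α ℂ := fc h (fun x => if x = 0 then 0 else (Real.sqrt x)⁻¹) with hQ
  set Pi : Matrix α α ℂ := fc h (fun x => if x = 0 then 0 else 1) with hPi
  set V : Matrix α α ℂ := M * Q with hV
  -- R * R = P
  have hRR : R * R = P := by
    rw [hR, hP, fc_mul_fc]
    exact fc_congr h _ _ fun i => Real.mul_self_sqrt (Real.sqrt_nonneg _)
  -- Q * P = Pi
  have hQP : Q * P = Pi := by
    rw [hQ, hP, hPi, fc_mul_fc]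
    refine fc_congr h _ _ fun i => ?_
    rcases eq_or_ne (h.eigenvalues i) 0 with h0 | h0
    · simp [h0]
    · have hpos : 0 < Real.sqrt (h.eigenvalues i) :=
        Real.sqrt_pos.mpr (lt_of_le_of_ne (heig i) (Ne.symm h0))
      simp [h0, inv_mul_cancel₀ (ne_of_gt hpos)]
  -- Q * (MᴴM) * Q = Pi
  have hQSQ : Q * (Mᴴ * M) * Q = Pi := by
    have t : Q * fc h (fun x => x) * Q = Pi := by
      rw [hQ, fc_mul_fc, fc_mul_fc, hPi]
      exact fc_congr h _ _ fun i => ar_qsq (heig i)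
    rwa [fc_id h] at t
  -- M * Pi = M
  have hMPi : M * Pi = M := by
    have e1 : fc h (fun _ => 1) - fc h (fun x => if x = 0 then 0 else 1) =
        fc h (fun x => 1 - if x = 0 then 0 else 1) := fc_sub h _ _
    have hombar : (1 : Matrix α α ℂ) - Pi = fc h (fun x => 1 - if x = 0 then 0 else 1) := by
      rw [hPi, ← e1, fc_one h]
    have hherm : (fc h (fun x => 1 - if x = 0 then 0 else 1)).IsHermitian := fc_isHermitian h _
    have hzero : (M * ((1 : Matrix α α ℂ) - Pi))ᴴ * (M * ((1 : Matrix α α ℂ) - Pi)) = 0 := by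
      rw [Matrix.conjTranspose_mul, hombar, hherm]
      have : fc h (fun x => 1 - if x = 0 then 0 else 1) * (Mᴴ * M) *
          fc h (fun x => 1 - if x = 0 then 0 else 1) = 0 := by
        have t : fc h (fun x => 1 - if x = 0 then 0 else 1) * fc h (fun x => x) *
            fc h (fun x => 1 - if x = 0 then 0 else 1) = 0 := by
          rw [fc_mul_fc, fc_mul_fc, ← fc_zero h]
          refine fc_congr h _ _ fun i => ?_
          rcases eq_or_ne (h.eigenvalues i) 0 with h0 | h0 <;> simp [h0]
        rwa [fc_id h] at t
      calc fc h (fun x => 1 - if x = 0 then 0 else 1) * Mᴴ *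
            (M * fc h (fun x => 1 - if x = 0 then 0 else 1)) =
          fc h (fun x => 1 - if x = 0 then 0 else 1) * (Mᴴ * M) *
            fc h (fun x => 1 - if x = 0 then 0 else 1) := by
            simp only [Matrix.mul_assoc]
        _ = 0 := this
    have := Matrix.conjTranspose_mul_self_eq_zero.mp hzero
    have h2 : M * (1 : Matrix α α ℂ) - M * Pi = 0 := by
      rw [← Matrix.mul_sub]; exact this
    rw [Matrix.mul_one] at h2
    exact (sub_eq_zero.mp h2).symm
  -- V * P = M
  have hVP : V * P = M := by
    rw [hV, Matrix.mul_assoc, hQP, hMPi]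
  -- Vᴴ * V = Pi
  have hVhV : Vᴴ * V = Pi := by
    have hQherm : Qᴴ = Q := fc_isHermitian h _
    rw [hV, Matrix.conjTranspose_mul, hQherm, ← hQSQ]
    simp only [Matrix.mul_assoc]
  -- 1 - Pi is PSD
  have hPile : ((1 : Matrix α α ℂ) - Pi).PosSemidef := by
    have e1 : fc h (fun _ => 1) - fc h (fun x => if x = 0 then 0 else 1) =
        fc h (fun x => 1 - if x = 0 then 0 else 1) := fc_sub h _ _
    rw [hPi, ← fc_one h, e1]
    refine fc_posSemidef h _ fun i => ?_
    rcases eq_or_ne (h.eigenvalues i) 0 with h0 | h0 <;> simp [h0]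
  -- 1 - V * Vᴴ is PSD
  have hVVle : ((1 : Matrix α α ℂ) - V * Vᴴ).PosSemidef := by
    have h1 : ((1 : Matrix α α ℂ) - Vᴴ * (Vᴴ)ᴴ).PosSemidef := by
      rw [Matrix.conjTranspose_conjTranspose, hVhV]
      exact hPile
    have h2 := flip_contraction h1
    rwa [Matrix.conjTranspose_conjTranspose] at h2
  -- trace rewriting
  have t0 : (M * K).trace = (R * (R * K * V)).trace := by
    calc (M * K).trace = (V * P * K).trace := by rw [hVP]
      _ = (V * (P * K)).trace := by rw [Matrix.mul_assoc]
      _ = ((P * K) * V).trace := Matrix.trace_mul_comm _ _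
      _ = (R * (R * K * V)).trace := by
          rw [← hRR]
          simp only [Matrix.mul_assoc]
  -- Cauchy-Schwarz
  have hRherm : Rᴴ = R := fc_isHermitian h _
  have cs := abs_trace_sq_le R (R * K * V)
  rw [hRherm] at cs
  -- tr (R*R) = traceNorm M
  have tRR : (R * R).trace.re = traceNorm M := by
    rw [hRR, hP]
    have := traceNorm_eq_trace_fc M
    rw [← hh] at this
    rw [← this]
    simp
  -- second factor bound
  have t2 : ((R * K * V)ᴴ * (R * K * V)).trace.re ≤ traceNorm M := by
    have e1 : ((R * K * V)ᴴ * (R * K * V)).trace = ((R * K) * (V * Vᴴ) * (R * K)ᴴ).trace := by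
      rw [Matrix.trace_mul_comm]
      rw [show R * K * V * (R * K * V)ᴴ = (R * K) * (V * Vᴴ) * (R * K)ᴴ by
        simp only [Matrix.conjTranspose_mul, Matrix.mul_assoc]]
    have m1 : ((R * K) * (V * Vᴴ) * (R * K)ᴴ).trace.re ≤
        ((R * K) * 1 * (R * K)ᴴ).trace.re :=
      trace_mono_of_psd (psd_conj_left hVVle (R * K))
    have e2 : (R * K) * (1 : Matrix α α ℂ) * (R * K)ᴴ = R * (K * Kᴴ) * Rᴴ := by
      rw [Matrix.mul_one, Matrix.conjTranspose_mul]
      simp only [Matrix.mul_assoc]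
    have m2 : (R * (K * Kᴴ) * Rᴴ).trace.re ≤ (R * 1 * Rᴴ).trace.re :=
      trace_mono_of_psd (psd_conj_left hK R)
    have e3 : (R * (1 : Matrix α α ℂ) * Rᴴ).trace.re = traceNorm M := by
      rw [Matrix.mul_one, hRherm, tRR]
    calc ((R * K * V)ᴴ * (R * K * V)).trace.re
        = ((R * K) * (V * Vᴴ) * (R * K)ᴴ).trace.re := by rw [e1]
      _ ≤ ((R * K) * 1 * (R * K)ᴴ).trace.re := m1
      _ = (R * (K * Kᴴ) * Rᴴ).trace.re := by rw [e2]
      _ ≤ (R * 1 * Rᴴ).trace.re := m2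
      _ = traceNorm M := e3
  have final : ‖(M * K).trace‖ ^ 2 ≤ traceNorm M * traceNorm M := by
    rw [t0]
    calc ‖(R * (R * K * V)).trace‖ ^ 2
        ≤ (R * R).trace.re * ((R * K * V)ᴴ * (R * K * V)).trace.re := by
          have := abs_trace_sq_le R (R * K * V)
          rwa [hRherm] at this
      _ ≤ traceNorm M * traceNorm M := by
          have hnn : 0 ≤ ((R * K * V)ᴴ * (R * K * V)).trace.re :=
            psd_trace_re_nonneg (Matrix.posSemidef_conjTranspose_mul_self _)
          rw [tRR]
          have h1 := t2
          nlinarith [traceNorm_nonneg M]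
  nlinarith [norm_nonneg ((M * K).trace), traceNorm_nonneg M, final]

/-- Attainment of the trace norm by a contraction. -/
lemma exists_contraction_trace_eq (M : Matrix α α ℂ) :
    ∃ U : Matrix α α ℂ, ((1 : Matrix α α ℂ) - U * Uᴴ).PosSemidef ∧
      (M * U).trace = ((traceNorm M : ℝ) : ℂ) := by
  classical
  have hS : (Mᴴ * M).PosSemidef := Matrix.posSemidef_conjTranspose_mul_self M
  set h : (Mᴴ * M).IsHermitian := hS.1 with hh
  have heig : ∀ i, 0 ≤ h.eigenvalues i := fun i => hS.eigenvalues_nonneg i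
  set Q : Matrix α α ℂ := fc h (fun x => if x = 0 then 0 else (Real.sqrt x)⁻¹) with hQ
  refine ⟨Q * Mᴴ, ?_, ?_⟩
  · -- (Q Mᴴ)(Q Mᴴ)ᴴ = Q S Q = Pi ⪯ 1
    have hQherm : Qᴴ = Q := fc_isHermitian h _
    have e : (Q * Mᴴ) * (Q * Mᴴ)ᴴ = Q * (Mᴴ * M) * Q := by
      rw [Matrix.conjTranspose_mul, Matrix.conjTranspose_conjTranspose, hQherm]
      simp only [Matrix.mul_assoc]
    rw [e]
    have e2 : Q * (Mᴴ * M) * Q = fc h (fun x => if x = 0 then 0 else 1) := by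
      have t : Q * fc h (fun x => x) * Q = fc h (fun x => if x = 0 then 0 else 1) := by
        rw [hQ, fc_mul_fc, fc_mul_fc]
        exact fc_congr h _ _ fun i => ar_qsq (heig i)
      rwa [fc_id h] at t
    rw [e2]
    have e1 : fc h (fun _ => 1) - fc h (fun x => if x = 0 then 0 else 1) =
        fc h (fun x => 1 - if x = 0 then 0 else 1) := fc_sub h _ _
    rw [← fc_one h, e1]
    refine fc_posSemidef h _ fun i => ?_
    rcases eq_or_ne (h.eigenvalues i) 0 with h0 | h0 <;> simp [h0]
  · have e : (M * (Q * Mᴴ)).trace = ((Mᴴ * M) * Q).trace := by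
      rw [show M * (Q * Mᴴ) = M * Q * Mᴴ by rw [Matrix.mul_assoc]]
      rw [Matrix.trace_mul_cycle]
    rw [e]
    have e2 : (Mᴴ * M) * Q = fc h Real.sqrt := by
      have t : fc h (fun x => x) * Q = fc h Real.sqrt := by
        rw [hQ, fc_mul_fc]
        refine fc_congr h _ _ fun i => ?_
        rw [mul_comm]
        exact ar_inv_mul (heig i)
      rwa [fc_id h] at t
    rw [e2, traceNorm_eq_trace_fc M]

end FidelityAux3
section FidelityAux4

variable {α β : Type*} [Fintype α] [DecidableEq α] [Fintype β] [DecidableEq β]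

lemma kron_conjTranspose (P : Matrix α α ℂ) (R : Matrix β β ℂ) :
    (P ⊗ₖ R)ᴴ = Pᴴ ⊗ₖ Rᴴ := by
  ext ⟨i, j⟩ ⟨k, l⟩
  simp [Matrix.conjTranspose_apply, Matrix.kroneckerMap_apply, star_mul', mul_comm]

lemma kron_posSemidef {P : Matrix α α ℂ} {R : Matrix β β ℂ}
    (hP : P.PosSemidef) (hR : R.PosSemidef) : (P ⊗ₖ R).PosSemidef := by
  exact hP.kronecker hR

lemma one_kron_sub (X Y : Matrix β β ℂ) :
    (1 : Matrix α α ℂ) ⊗ₖ (X - Y) = 1 ⊗ₖ X - 1 ⊗ₖ Y := by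
  ext ⟨i, j⟩ ⟨k, l⟩
  simp [Matrix.kroneckerMap_apply, Matrix.sub_apply, mul_sub]

lemma kron_sqrt {σ : Matrix α α ℂ} {χ : Matrix β β ℂ} (hσ : σ.PosSemidef) (hχ : χ.PosSemidef)
    (hk : (σ ⊗ₖ χ).PosSemidef) : hk.sqrt = hσ.sqrt ⊗ₖ hχ.sqrt := by
  refine ((kron_posSemidef hσ.posSemidef_sqrt hχ.posSemidef_sqrt).eq_sqrt_of_sq_eq hk ?_).symm
  rw [pow_two, ← Matrix.mul_kronecker_mul, Matrix.PosSemidef.sqrt_mul_self,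
    Matrix.PosSemidef.sqrt_mul_self]

/-- the isometry embedding `β → α × β` at a fixed `a` -/
def pembed (a : α) : Matrix (α × β) β ℂ :=
  Matrix.of fun p b => if p = (a, b) then 1 else 0

lemma ptraceFst_eq_sum (Y : Matrix (α × β) (α × β) ℂ) :
    ptraceFst Y = ∑ a, ((pembed a)ᴴ : Matrix β (α × β) ℂ) * Y * (pembed a : Matrix (α × β) β ℂ) := by
  ext b b'
  simp only [ptraceFst, Matrix.of_apply, Matrix.sum_apply, Matrix.mul_apply,
    Matrix.conjTranspose_apply, pembed]
  apply Finset.sum_congr rfl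
  intro a _
  simp [apply_ite (star : ℂ → ℂ), ite_mul, mul_ite, Finset.sum_ite_eq, Finset.sum_ite_eq']

lemma sum_pembed_mul (M : Matrix β β ℂ) :
    ∑ a : α, (pembed a : Matrix (α × β) β ℂ) * M * ((pembed a)ᴴ : Matrix β (α × β) ℂ) = (1 : Matrix α α ℂ) ⊗ₖ M := by
  ext ⟨a1, b1⟩ ⟨a2, b2⟩
  simp only [Matrix.sum_apply, Matrix.mul_apply, Matrix.conjTranspose_apply, pembed,
    Matrix.of_apply, Matrix.kroneckerMap_apply, Matrix.one_apply]
  simp only [apply_ite (star : ℂ → ℂ), star_one, star_zero, ite_mul, mul_ite, one_mul, mul_one,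
    zero_mul, mul_zero, Prod.mk.injEq, Prod.ext_iff]
  by_cases h : a1 = a2 <;>
    simp [h, ite_and, Finset.sum_ite_eq, Finset.sum_ite_eq', eq_comm]

lemma trace_one_kron_mul (M : Matrix β β ℂ) (Y : Matrix (α × β) (α × β) ℂ) :
    (((1 : Matrix α α ℂ) ⊗ₖ M) * Y).trace = (M * ptraceFst Y).trace := by
  rw [← sum_pembed_mul, Finset.sum_mul, Matrix.trace_sum, ptraceFst_eq_sum, Matrix.mul_sum,
    Matrix.trace_sum]
  apply Finset.sum_congr rfl
  intro a _
  set E : Matrix (α × β) β ℂ := pembed a with hE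
  have e : E * M * Eᴴ * Y = E * (M * (Eᴴ * Y)) := by
    simp only [Matrix.mul_assoc]
  rw [e, Matrix.trace_mul_comm]
  simp only [Matrix.mul_assoc]

lemma ptraceFst_posSemidef {ρ : Matrix (α × β) (α × β) ℂ} (hρ : ρ.PosSemidef) :
    (ptraceFst ρ).PosSemidef := by
  rw [ptraceFst_eq_sum]
  apply Finset.sum_induction _ _ (fun _ _ => Matrix.PosSemidef.add) Matrix.PosSemidef.zero
  intro a _
  exact hρ.conjTranspose_mul_mul_same _

lemma ptraceFst_sub (X Y : Matrix (α × β) (α × β) ℂ) :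
    ptraceFst (Y - X) = ptraceFst Y - ptraceFst X := by
  ext b b'
  simp [ptraceFst, Finset.sum_sub_distrib]

lemma ptraceFst_mono {X Y : Matrix (α × β) (α × β) ℂ} (h : (Y - X).PosSemidef) :
    (ptraceFst Y - ptraceFst X).PosSemidef := by
  rw [← ptraceFst_sub]
  exact ptraceFst_posSemidef h

lemma ptraceFst_kron_one (σ : Matrix α α ℂ) :
    ptraceFst (σ ⊗ₖ (1 : Matrix β β ℂ)) = σ.trace • (1 : Matrix β β ℂ) := by
  ext b b'
  simp only [ptraceFst, Matrix.of_apply, Matrix.kroneckerMap_apply, Matrix.one_apply,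
    Matrix.smul_apply, Matrix.trace, Matrix.diag_apply, smul_eq_mul]
  by_cases h : b = b' <;> simp [h, Finset.sum_mul]

end FidelityAux4
section FidelityAux5

variable {α β : Type*} [Fintype α] [DecidableEq α] [Fintype β] [DecidableEq β]

variable {S : Matrix α α ℂ} (hS : S.PosSemidef)

/-- pseudo-inverse square root -/
lemma psd_sqrt_mul_pinv :
    hS.sqrt * fc hS.1 (fun x => if x = 0 then 0 else (Real.sqrt x)⁻¹) =
      fc hS.1 (fun x => if x = 0 then 0 else 1) := by
  rw [sqrt_eq_fc hS, fc_mul_fc]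
  refine fc_congr hS.1 _ _ fun i => ?_
  rcases eq_or_ne (hS.1.eigenvalues i) 0 with h0 | h0
  · simp [h0]
  · have hpos : 0 < Real.sqrt (hS.1.eigenvalues i) :=
      Real.sqrt_pos.mpr (lt_of_le_of_ne (hS.eigenvalues_nonneg i) (Ne.symm h0))
    simp [h0, mul_inv_cancel₀ (ne_of_gt hpos)]

lemma psd_pinv_conj :
    fc hS.1 (fun x => if x = 0 then 0 else (Real.sqrt x)⁻¹) * S *
      fc hS.1 (fun x => if x = 0 then 0 else (Real.sqrt x)⁻¹) =
      fc hS.1 (fun x => if x = 0 then 0 else 1) := by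
  have t : fc hS.1 (fun x => if x = 0 then 0 else (Real.sqrt x)⁻¹) * fc hS.1 (fun x => x) *
      fc hS.1 (fun x => if x = 0 then 0 else (Real.sqrt x)⁻¹) =
      fc hS.1 (fun x => if x = 0 then 0 else 1) := by
    rw [fc_mul_fc, fc_mul_fc]
    exact fc_congr hS.1 _ _ fun i => ar_qsq (hS.eigenvalues_nonneg i)
  rwa [fc_id hS.1] at t

lemma psd_one_sub_proj :
    ((1 : Matrix α α ℂ) - fc hS.1 (fun x => if x = 0 then 0 else 1)).PosSemidef := by
  have e1 : fc hS.1 (fun _ => 1) - fc hS.1 (fun x => if x = 0 then 0 else 1) =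
      fc hS.1 (fun x => 1 - if x = 0 then 0 else 1) := fc_sub hS.1 _ _
  rw [← fc_one hS.1, e1]
  refine fc_posSemidef hS.1 _ fun i => ?_
  rcases eq_or_ne (hS.1.eigenvalues i) 0 with h0 | h0 <;> simp [h0]

lemma psd_proj_compl_conj :
    ((1 : Matrix α α ℂ) - fc hS.1 (fun x => if x = 0 then 0 else 1)) * S *
      ((1 : Matrix α α ℂ) - fc hS.1 (fun x => if x = 0 then 0 else 1)) = 0 := by
  have e1 : fc hS.1 (fun _ => 1) - fc hS.1 (fun x => if x = 0 then 0 else 1) =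
      fc hS.1 (fun x => 1 - if x = 0 then 0 else 1) := fc_sub hS.1 _ _
  rw [← fc_one hS.1, e1]
  have t : fc hS.1 (fun x => 1 - if x = 0 then 0 else 1) * fc hS.1 (fun x => x) *
      fc hS.1 (fun x => 1 - if x = 0 then 0 else 1) = 0 := by
    rw [fc_mul_fc, fc_mul_fc, ← fc_zero hS.1]
    refine fc_congr hS.1 _ _ fun i => ?_
    rcases eq_or_ne (hS.1.eigenvalues i) 0 with h0 | h0 <;> simp [h0]
  rwa [fc_id hS.1] at t

lemma psd_pinv_herm :
    (fc hS.1 (fun x => if x = 0 then 0 else (Real.sqrt x)⁻¹))ᴴ =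
      fc hS.1 (fun x => if x = 0 then 0 else (Real.sqrt x)⁻¹) := fc_isHermitian hS.1 _

lemma psd_proj_herm :
    (fc hS.1 (fun x => if x = 0 then 0 else 1))ᴴ =
      fc hS.1 (fun x => if x = 0 then 0 else 1) := fc_isHermitian hS.1 _

/-- if `-(ZᴴZ)` is PSD then `Z = 0` -/
lemma eq_zero_of_neg_psd {Z : Matrix α β ℂ}
    (h : ((0 : Matrix β β ℂ) - Zᴴ * Z).PosSemidef) : Z = 0 := by
  ext k j
  have hj := psd_diag_nonneg h j
  have hdiag : (Zᴴ * Z) j j = ((∑ i, Complex.normSq (Z i j) : ℝ) : ℂ) := by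
    rw [Matrix.mul_apply]
    push_cast
    apply Finset.sum_congr rfl
    intro i _
    rw [Matrix.conjTranspose_apply, Complex.star_def, mul_comm, Complex.mul_conj]
  have hle : 0 ≤ -((∑ i, Complex.normSq (Z i j) : ℝ) : ℂ) := by
    have e : ((0 : Matrix β β ℂ) - Zᴴ * Z) j j = -((∑ i, Complex.normSq (Z i j) : ℝ) : ℂ) := by
      rw [Matrix.sub_apply, hdiag, Matrix.zero_apply, zero_sub]
    rwa [e] at hj
  rw [Complex.le_def] at hle
  simp only [Complex.neg_re, Complex.ofReal_re, Complex.zero_re] at hle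
  have hsum : (∑ i, Complex.normSq (Z i j)) = 0 := by
    have h2 : 0 ≤ ∑ i, Complex.normSq (Z i j) :=
      Finset.sum_nonneg fun i _ => Complex.normSq_nonneg _
    linarith [hle.1]
  have hall := (Finset.sum_eq_zero_iff_of_nonneg
    (fun i _ => Complex.normSq_nonneg (Z i j))).mp hsum
  rw [Matrix.zero_apply]
  exact Complex.normSq_eq_zero.mp (hall k (Finset.mem_univ k))

/-- the row-block matrix `[E_aᴴ W]_a` -/
def bigA (Wm : Matrix (α × β) (α × β) ℂ) : Matrix β (α × (α × β)) ℂ :=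
  Matrix.of fun b q => (((pembed q.1)ᴴ : Matrix β (α × β) ℂ) * Wm) b q.2

lemma bigA_mul_conjT (W1 W2 : Matrix (α × β) (α × β) ℂ) :
    bigA W1 * (bigA W2)ᴴ = ptraceFst (W1 * W2ᴴ) := by
  ext b b'
  rw [Matrix.mul_apply, Fintype.sum_prod_type, ptraceFst_eq_sum, Matrix.sum_apply]
  apply Finset.sum_congr rfl
  intro a _
  have e : ((pembed a)ᴴ : Matrix β (α × β) ℂ) * (W1 * W2ᴴ) * (pembed a : Matrix (α × β) β ℂ)
      = (((pembed a)ᴴ : Matrix β (α × β) ℂ) * W1) * ((((pembed a)ᴴ : Matrix β (α × β) ℂ) * W2))ᴴ := by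
    rw [Matrix.conjTranspose_mul, Matrix.conjTranspose_conjTranspose]
    simp only [Matrix.mul_assoc]
  rw [e, Matrix.mul_apply]
  apply Finset.sum_congr rfl
  intro p _
  simp [bigA, Matrix.conjTranspose_apply]

end FidelityAux5
/-- Fidelity triangle-type bound:
`F(ρ_{AB}, σ_A ⊗ ρ_B) ≥ F(ρ_{AB}, σ_A ⊗ χ_B)²` where `ρ_B = tr_A ρ_{AB}`. -/
theorem fidelity_marginal_bound (ρ : Matrix (A × B) (A × B) ℂ) (σ : Matrix A A ℂ)
    (χ : Matrix B B ℂ) (hρ : IsDensity ρ) (hσ : IsDensity σ) (hχ : IsDensity χ) :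
    fidelity ρ (σ ⊗ₖ ptraceFst ρ) ≥ (fidelity ρ (σ ⊗ₖ χ)) ^ 2 := by
  classical
  obtain ⟨hρp, hρt⟩ := hρ
  obtain ⟨hσp, hσt⟩ := hσ
  obtain ⟨hχp, hχt⟩ := hχ
  have hβp : (ptraceFst ρ).PosSemidef := ptraceFst_posSemidef hρp
  have hkχ : (σ ⊗ₖ χ).PosSemidef := kron_posSemidef hσp hχp
  have hkβ : (σ ⊗ₖ ptraceFst ρ).PosSemidef := kron_posSemidef hσp hβp
  set sρ : Matrix (A × B) (A × B) ℂ := hρp.sqrt with hsρ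
  set sσ : Matrix A A ℂ := hσp.sqrt with hsσ
  set sχ : Matrix B B ℂ := hχp.sqrt with hsχ
  set sβ : Matrix B B ℂ := hβp.sqrt with hsβ
  have hfid1 : fidelity ρ (σ ⊗ₖ χ) = traceNorm (sρ * (sσ ⊗ₖ sχ)) := by
    rw [fidelity, matRpow_psd_eq_sqrt hρp, matRpow_psd_eq_sqrt hkχ, kron_sqrt hσp hχp hkχ]
  have hfid2 : fidelity ρ (σ ⊗ₖ ptraceFst ρ) = traceNorm (sρ * (sσ ⊗ₖ sβ)) := by
    rw [fidelity, matRpow_psd_eq_sqrt hρp, matRpow_psd_eq_sqrt hkβ, kron_sqrt hσp hβp hkβ]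
  set X : Matrix (A × B) (A × B) ℂ := sρ * (sσ ⊗ₖ sχ) with hX
  obtain ⟨U, hU, hUtr⟩ := exists_contraction_trace_eq X
  set W : Matrix (A × B) (A × B) ℂ := (sσ ⊗ₖ (1 : Matrix B B ℂ)) * U with hW
  set Y : Matrix (A × B) (A × B) ℂ := W * sρ with hY
  set G : Matrix B B ℂ := ptraceFst Y with hG
  -- hermitian squares of the square roots
  have hsρh : sρᴴ = sρ := hρp.posSemidef_sqrt.1
  have hsσh : sσᴴ = sσ := hσp.posSemidef_sqrt.1
  have hsχh : sχᴴ = sχ := hχp.posSemidef_sqrt.1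
  have hsβh : sβᴴ = sβ := hβp.posSemidef_sqrt.1
  have hsρ2 : sρ * sρ = ρ := hρp.sqrt_mul_self
  have hsσ2 : sσ * sσ = σ := hσp.sqrt_mul_self
  have hsχ2 : sχ * sχ = χ := hχp.sqrt_mul_self
  have hsβ2 : sβ * sβ = ptraceFst ρ := hβp.sqrt_mul_self
  -- Step B : tr (X U) = tr (sχ G)
  have stepB : (X * U).trace = (sχ * G).trace := by
    have e2 : (sσ ⊗ₖ sχ) = ((1 : Matrix A A ℂ) ⊗ₖ sχ) * (sσ ⊗ₖ (1 : Matrix B B ℂ)) := by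
      rw [← Matrix.mul_kronecker_mul, Matrix.one_mul, Matrix.mul_one]
    calc (X * U).trace = (sρ * ((sσ ⊗ₖ sχ) * U)).trace := by
          rw [hX]; simp only [Matrix.mul_assoc]
      _ = (((sσ ⊗ₖ sχ) * U) * sρ).trace := Matrix.trace_mul_comm _ _
      _ = ((((1 : Matrix A A ℂ) ⊗ₖ sχ) * ((sσ ⊗ₖ (1 : Matrix B B ℂ)) * U)) * sρ).trace := by
          rw [e2]; simp only [Matrix.mul_assoc]
      _ = (((1 : Matrix A A ℂ) ⊗ₖ sχ) * Y).trace := by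
          rw [hY, hW]; simp only [Matrix.mul_assoc]
      _ = (sχ * G).trace := trace_one_kron_mul sχ Y
  have hF1C : ((traceNorm X : ℝ) : ℂ) = (sχ * G).trace := by rw [← stepB, hUtr]
  -- Step C : F₁² ≤ re tr(GᴴG)
  have stepC : traceNorm X ^ 2 ≤ (Gᴴ * G).trace.re := by
    have cs := abs_trace_sq_le sχ G
    rw [hsχh, hsχ2, ← hF1C] at cs
    have habs : ‖((traceNorm X : ℝ) : ℂ)‖ = traceNorm X := by
      rw [Complex.norm_of_nonneg (traceNorm_nonneg X)]
    rw [habs] at cs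
    have hret : (χ.trace).re = 1 := by rw [hχt]; simp
    rw [hret, one_mul] at cs
    exact cs
  -- operator Cauchy-Schwarz : GᴴG ⪯ ρ_B
  set Am : Matrix B (A × (A × B)) ℂ := bigA W with hAm
  set Bm : Matrix (A × (A × B)) B ℂ := (bigA sρ)ᴴ with hBm
  have hGf : G = Am * Bm := by
    rw [hAm, hBm, bigA_mul_conjT, hsρh, hG, hY]
  have hWW : ((σ ⊗ₖ (1 : Matrix B B ℂ)) - W * Wᴴ).PosSemidef := by
    have h2 := psd_conj_left hU (sσ ⊗ₖ (1 : Matrix B B ℂ))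
    have e1 : (sσ ⊗ₖ (1 : Matrix B B ℂ)) * 1 * (sσ ⊗ₖ (1 : Matrix B B ℂ))ᴴ =
        σ ⊗ₖ (1 : Matrix B B ℂ) := by
      rw [Matrix.mul_one, kron_conjTranspose, hsσh, Matrix.conjTranspose_one,
        ← Matrix.mul_kronecker_mul, hsσ2, Matrix.one_mul]
    have e2 : (sσ ⊗ₖ (1 : Matrix B B ℂ)) * (U * Uᴴ) * (sσ ⊗ₖ (1 : Matrix B B ℂ))ᴴ =
        W * Wᴴ := by
      rw [hW, Matrix.conjTranspose_mul]
      simp only [Matrix.mul_assoc]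
    rwa [e1, e2] at h2
  have h1A : ((1 : Matrix B B ℂ) - Am * Amᴴ).PosSemidef := by
    have h2 := ptraceFst_mono hWW
    rw [ptraceFst_kron_one, hσt, one_smul] at h2
    have e : ptraceFst (W * Wᴴ) = Am * Amᴴ := (bigA_mul_conjT W W).symm
    rwa [e] at h2
  have hL4 : (ptraceFst ρ - Gᴴ * G).PosSemidef := by
    have h2 := psd_conj_right (flip_contraction h1A) Bm
    have e1 : Bmᴴ * (1 : Matrix (A × (A × B)) (A × (A × B)) ℂ) * Bm = ptraceFst ρ := by
      rw [Matrix.mul_one, hBm, Matrix.conjTranspose_conjTranspose, bigA_mul_conjT, hsρh, hsρ2]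
    have e2 : Bmᴴ * (Amᴴ * Am) * Bm = Gᴴ * G := by
      rw [hGf, Matrix.conjTranspose_mul]
      simp only [Matrix.mul_assoc]
    rwa [e1, e2] at h2
  -- Douglas factorization : Gᴴ = sβ * Cm with Cm a contraction
  set Qb : Matrix B B ℂ := fc hβp.1 (fun x => if x = 0 then 0 else (Real.sqrt x)⁻¹) with hQb
  set Pib : Matrix B B ℂ := fc hβp.1 (fun x => if x = 0 then 0 else 1) with hPib
  set Cm : Matrix B B ℂ := Qb * Gᴴ with hCm
  have hQbh : Qbᴴ = Qb := psd_pinv_herm hβp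
  have hPibh : Pibᴴ = Pib := psd_proj_herm hβp
  have hC1 : ((1 : Matrix B B ℂ) - Cm * Cmᴴ).PosSemidef := by
    have h2 := psd_conj_left hL4 Qb
    have e1 : Qb * ptraceFst ρ * Qbᴴ = Pib := by
      rw [hQbh, hQb, hPib]; exact psd_pinv_conj hβp
    have e2 : Qb * (Gᴴ * G) * Qbᴴ = Cm * Cmᴴ := by
      rw [hQbh, hCm, Matrix.conjTranspose_mul, Matrix.conjTranspose_conjTranspose, hQbh]
      simp only [Matrix.mul_assoc]
    rw [e1, e2] at h2
    have h3 : ((1 : Matrix B B ℂ) - Pib).PosSemidef := by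
      rw [hPib]; exact psd_one_sub_proj hβp
    have e3 : (1 : Matrix B B ℂ) - Cm * Cmᴴ =
        ((1 : Matrix B B ℂ) - Pib) + (Pib - Cm * Cmᴴ) := by rw [sub_add_sub_cancel]
    rw [e3]
    exact h3.add h2
  have hGPi : G * Pib = G := by
    have hz : (G * ((1 : Matrix B B ℂ) - Pib)) = 0 := by
      apply eq_zero_of_neg_psd
      have h2 := psd_conj_right hL4 ((1 : Matrix B B ℂ) - Pib)
      have hbar : ((1 : Matrix B B ℂ) - Pib)ᴴ = (1 : Matrix B B ℂ) - Pib := by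
        rw [Matrix.conjTranspose_sub, Matrix.conjTranspose_one, hPibh]
      have e1 : ((1 : Matrix B B ℂ) - Pib)ᴴ * ptraceFst ρ * ((1 : Matrix B B ℂ) - Pib) = 0 := by
        rw [hbar, hPib]; exact psd_proj_compl_conj hβp
      have e2 : ((1 : Matrix B B ℂ) - Pib)ᴴ * (Gᴴ * G) * ((1 : Matrix B B ℂ) - Pib) =
          (G * ((1 : Matrix B B ℂ) - Pib))ᴴ * (G * ((1 : Matrix B B ℂ) - Pib)) := by
        rw [Matrix.conjTranspose_mul, hbar]
        simp only [Matrix.mul_assoc]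
      rwa [e1, e2] at h2
    have h4 : G * (1 : Matrix B B ℂ) - G * Pib = 0 := by rw [← Matrix.mul_sub]; exact hz
    rw [Matrix.mul_one] at h4
    exact (sub_eq_zero.mp h4).symm
  have hC2 : sβ * Cm = Gᴴ := by
    have e1 : sβ * Qb = Pib := by
      rw [hsβ, hQb, hPib]; exact psd_sqrt_mul_pinv hβp
    calc sβ * Cm = (sβ * Qb) * Gᴴ := by rw [hCm]; simp only [Matrix.mul_assoc]
      _ = Pib * Gᴴ := by rw [e1]
      _ = (G * Pib)ᴴ := by rw [Matrix.conjTranspose_mul, hPibh]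
      _ = Gᴴ := by rw [hGPi]
  -- Step D : tr(GᴴG) = tr(X' K) with K a contraction
  set K : Matrix (A × B) (A × B) ℂ := ((1 : Matrix A A ℂ) ⊗ₖ Cm) * U with hK
  have stepD : (Gᴴ * G).trace = ((sρ * (sσ ⊗ₖ sβ)) * K).trace := by
    have t1 : (Gᴴ * G).trace = (((1 : Matrix A A ℂ) ⊗ₖ Gᴴ) * Y).trace := by
      rw [trace_one_kron_mul Gᴴ Y, ← hG]
    have t2 : ((1 : Matrix A A ℂ) ⊗ₖ Gᴴ) * Y = (sσ ⊗ₖ sβ) * K * sρ := by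
      rw [hY, hW]
      have e1 : ((1 : Matrix A A ℂ) ⊗ₖ Gᴴ) * (sσ ⊗ₖ (1 : Matrix B B ℂ)) = sσ ⊗ₖ Gᴴ := by
        rw [← Matrix.mul_kronecker_mul, Matrix.one_mul, Matrix.mul_one]
      have e2 : (sσ ⊗ₖ Gᴴ) = (sσ ⊗ₖ sβ) * ((1 : Matrix A A ℂ) ⊗ₖ Cm) := by
        rw [← Matrix.mul_kronecker_mul, Matrix.mul_one, hC2]
      calc ((1 : Matrix A A ℂ) ⊗ₖ Gᴴ) * ((sσ ⊗ₖ (1 : Matrix B B ℂ)) * U * sρ)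
          = (((1 : Matrix A A ℂ) ⊗ₖ Gᴴ) * (sσ ⊗ₖ (1 : Matrix B B ℂ))) * (U * sρ) := by
            simp only [Matrix.mul_assoc]
        _ = ((sσ ⊗ₖ sβ) * ((1 : Matrix A A ℂ) ⊗ₖ Cm)) * (U * sρ) := by rw [e1, e2]
        _ = (sσ ⊗ₖ sβ) * K * sρ := by rw [hK]; simp only [Matrix.mul_assoc]
    rw [t1, t2, Matrix.trace_mul_cycle]
  have hKcon : ((1 : Matrix (A × B) (A × B) ℂ) - K * Kᴴ).PosSemidef := by
    have h2 := psd_conj_left hU ((1 : Matrix A A ℂ) ⊗ₖ Cm)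
    have e1 : ((1 : Matrix A A ℂ) ⊗ₖ Cm) * 1 * ((1 : Matrix A A ℂ) ⊗ₖ Cm)ᴴ =
        (1 : Matrix A A ℂ) ⊗ₖ (Cm * Cmᴴ) := by
      rw [Matrix.mul_one, kron_conjTranspose, Matrix.conjTranspose_one,
        ← Matrix.mul_kronecker_mul, Matrix.one_mul]
    have e2 : ((1 : Matrix A A ℂ) ⊗ₖ Cm) * (U * Uᴴ) * ((1 : Matrix A A ℂ) ⊗ₖ Cm)ᴴ =
        K * Kᴴ := by
      rw [hK, Matrix.conjTranspose_mul]
      simp only [Matrix.mul_assoc]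
    rw [e1, e2] at h2
    have h3 : ((1 : Matrix (A × B) (A × B) ℂ) -
        (1 : Matrix A A ℂ) ⊗ₖ (Cm * Cmᴴ)).PosSemidef := by
      have e3 : (1 : Matrix (A × B) (A × B) ℂ) - (1 : Matrix A A ℂ) ⊗ₖ (Cm * Cmᴴ) =
          (1 : Matrix A A ℂ) ⊗ₖ ((1 : Matrix B B ℂ) - Cm * Cmᴴ) := by
        rw [one_kron_sub, Matrix.one_kronecker_one]
      rw [e3]
      exact kron_posSemidef Matrix.PosSemidef.one hC1
    have e4 : (1 : Matrix (A × B) (A × B) ℂ) - K * Kᴴ =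
        ((1 : Matrix (A × B) (A × B) ℂ) - (1 : Matrix A A ℂ) ⊗ₖ (Cm * Cmᴴ)) +
          ((1 : Matrix A A ℂ) ⊗ₖ (Cm * Cmᴴ) - K * Kᴴ) := by rw [sub_add_sub_cancel]
    rw [e4]
    exact h3.add h2
  -- final assembly
  have stepE : (Gᴴ * G).trace.re ≤ traceNorm (sρ * (sσ ⊗ₖ sβ)) := by
    have hd := abs_trace_mul_le_traceNorm (sρ * (sσ ⊗ₖ sβ)) K hKcon
    have h5 : (Gᴴ * G).trace.re ≤ ‖((sρ * (sσ ⊗ₖ sβ)) * K).trace‖ := by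
      rw [← stepD]
      exact Complex.re_le_norm _
    linarith
  rw [ge_iff_le, hfid1, hfid2]
  exact le_trans stepC stepE

end QIT
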